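/- Let n be a positive integer and q a complex number with q^j ≠ 1 for all 1 ≤ j ≤ n-1. In the formal power series ring ℂ[[u,v,w]], define Φ(1;q) = Σ_{k,r,s ≥ 0} G(k,r,s;1;q) u^{k-r-s} v^{r-s} w^{s}, where G(k,r,s;1;q) = Σ_{k ∈ I(k,r,s)} L_{k}^{(n)}(1;q) is the sum of the finite q-multiple polylogarithms at t=1 over all indices of weight k, depth r, height s, and G(0,0,0;1;q) = 1. Then Φ(1;q) · Π_{j=1}^{n-1} (1-q^j)(1-u-q^j) = Π_{j=1}^{n-1} P(q^j) holds in ℂ[[u,v,w]], where P(X) = (1-u-X)(1+v-X) + w. -/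

import Mathlib

open Finset

/-- The set of tuples `(m_1,...,m_r)` with `n > m_1 > m_2 > ... > m_r > 0`. -/
def msets (n r : ℕ) : Finset (Fin r → Fin n) :=
  Finset.univ.filter fun m =>
    (∀ i j : Fin r, i < j → m j < m i) ∧ ∀ i, 0 < (m i : ℕ)

/-- The set of tuples `(m_1,...,m_r)` with `n > m_1 ≥ m_2 ≥ ... ≥ m_r > 0`. -/
def msetsStar (n r : ℕ) : Finset (Fin r → Fin n) :=
  Finset.univ.filter fun m =>
    (∀ i j : Fin r, i ≤ j → m j ≤ m i) ∧ ∀ i, 0 < (m i : ℕ)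

/-- The finite multiple harmonic q-series
`z_n(k_1,…,k_r; q) = Σ_{n > m_1 > … > m_r > 0} Π_i q^{(k_i-1)m_i}/[m_i]_q^{k_i}`,
where `[m]_q = (1-q^m)/(1-q)`. -/
noncomputable def z (n : ℕ) {r : ℕ} (k : Fin r → ℕ) (q : ℂ) : ℂ :=
  ∑ m ∈ msets n r,
    ∏ i, q ^ ((k i - 1) * (m i : ℕ)) / ((1 - q ^ (m i : ℕ)) / (1 - q)) ^ (k i)

/-- The star version `z*_n(k; q)`, summed over `n > m_1 ≥ … ≥ m_r > 0`. -/
noncomputable def zstar (n : ℕ) {r : ℕ} (k : Fin r → ℕ) (q : ℂ) : ℂ :=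
  ∑ m ∈ msetsStar n r,
    ∏ i, q ^ ((k i - 1) * (m i : ℕ)) / ((1 - q ^ (m i : ℕ)) / (1 - q)) ^ (k i)

/-- The modified value `z̄_n(k;q) = (1-q)^{-wt(k)} z_n(k;q)`. -/
noncomputable def zbar (n : ℕ) {r : ℕ} (k : Fin r → ℕ) (q : ℂ) : ℂ :=
  (1 - q)⁻¹ ^ (∑ i, k i) * z n k q

/-- The modified star value `z̄*_n(k;q) = (1-q)^{-wt(k)} z*_n(k;q)`. -/
noncomputable def zstarbar (n : ℕ) {r : ℕ} (k : Fin r → ℕ) (q : ℂ) : ℂ :=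
  (1 - q)⁻¹ ^ (∑ i, k i) * zstar n k q

/-- `I(k,r,s)`: the set of indices (tuples of positive integers) of weight `k`,
depth `r` and height `s`. -/
def indexSet3 (k r s : ℕ) : Finset (Fin r → ℕ) :=
  (Finset.Nat.antidiagonalTuple r k).filter fun a =>
    (∀ i, 1 ≤ a i) ∧ (Finset.univ.filter fun i => 2 ≤ a i).card = s

/-- `I(k,r)`: the set of indices of weight `k` and depth `r`. -/
def indexSet2 (k r : ℕ) : Finset (Fin r → ℕ) :=
  (Finset.Nat.antidiagonalTuple r k).filter fun a => ∀ i, 1 ≤ a i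

/-- The one-variable finite q-multiple polylogarithm
`L_{k_1,…,k_r}^{(n)}(t;q) = Σ_{n > m_1 > … > m_r > 0} t^{m_1} / Π_i (1-q^{m_i})^{k_i}`,
with `L_∅(t) = 1`. -/
noncomputable def Lpoly (n : ℕ) {r : ℕ} (k : Fin r → ℕ) (q t : ℂ) : ℂ :=
  ∑ m ∈ msets n r,
    ∏ i : Fin r, (if i.val = 0 then t ^ (m i : ℕ) else 1) / (1 - q ^ (m i : ℕ)) ^ (k i)

/-- The star version `L*_{k_1,…,k_r}^{(n)}(t;q)`, summed over `n > m_1 ≥ … ≥ m_r > 0`. -/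
noncomputable def LpolyStar (n : ℕ) {r : ℕ} (k : Fin r → ℕ) (q t : ℂ) : ℂ :=
  ∑ m ∈ msetsStar n r,
    ∏ i : Fin r, (if i.val = 0 then t ^ (m i : ℕ) else 1) / (1 - q ^ (m i : ℕ)) ^ (k i)

/-- The variables `x, y, z` (resp. `u, v, w`) of `ℂ[[x,y,z]]`. -/
noncomputable def Xv (i : Fin 3) : MvPowerSeries (Fin 3) ℂ := MvPowerSeries.X i

/-- Constant power series. -/
noncomputable def Cc (c : ℂ) : MvPowerSeries (Fin 3) ℂ := MvPowerSeries.C c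

/-- The generating function `Φ(1;q)` in `ℂ[[u,v,w]]`: the coefficient of
`u^{k-r-s} v^{r-s} w^s` is `G(k,r,s;1;q) = Σ_{k ∈ I(k,r,s)} L_k^{(n)}(1;q)`. -/
noncomputable def PhiOne (n : ℕ) (q : ℂ) : MvPowerSeries (Fin 3) ℂ :=
  fun e => ∑ a ∈ indexSet3 (e 0 + e 1 + 2 * e 2) (e 1 + e 2) (e 2), Lpoly n a q 1

section Aux

lemma Lpoly_one (n : ℕ) {r : ℕ} (a : Fin r → ℕ) (q : ℂ) :
    Lpoly n a q 1 = ∑ m ∈ msets n r, ∏ i, ((1 - q ^ (m i : ℕ))⁻¹) ^ (a i) := by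
  unfold Lpoly
  refine Finset.sum_congr rfl fun m _ => Finset.prod_congr rfl fun i _ => ?_
  rw [one_pow, ite_self, one_div, inv_pow]

lemma Lpoly_nil (n : ℕ) (b : Fin 0 → ℕ) (q t : ℂ) : Lpoly n b q t = 1 := by
  unfold Lpoly msets
  rw [Finset.filter_true_of_mem (fun m _ => ⟨fun i => i.elim0, fun i => i.elim0⟩)]
  simp

lemma mem_msets {n r : ℕ} {m : Fin r → Fin n} :
    m ∈ msets n r ↔ (∀ i j : Fin r, i < j → m j < m i) ∧ ∀ i, 0 < (m i : ℕ) := by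
  simp [msets]

lemma Lpoly_succ (n : ℕ) (hn : 1 ≤ n) {r : ℕ} (a : Fin (r + 1) → ℕ) (q : ℂ) :
    Lpoly (n + 1) a q 1
      = Lpoly n a q 1 + (1 - q ^ n)⁻¹ ^ (a 0) * Lpoly n (Fin.tail a) q 1 := by
  have hn0 : 0 < n := hn
  rw [Lpoly_one, Lpoly_one, Lpoly_one]
  rw [← Finset.sum_filter_add_sum_filter_not (msets (n + 1) (r + 1))
      (fun m => ¬ m 0 = Fin.last n)]
  congr 1
  · -- part with m 0 ≠ last n  ↦  msets n (r+1)
    refine Finset.sum_nbij'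
      (i := fun m => fun i : Fin (r + 1) => (⟨(m i : ℕ) % n, Nat.mod_lt _ hn0⟩ : Fin n))
      (j := fun m' => fun i => (m' i).castSucc)
      ?_ ?_ ?_ ?_ ?_
    all_goals intro m hm
    · rw [Finset.mem_filter] at hm
      obtain ⟨hm0, h0⟩ := hm
      rw [mem_msets] at hm0
      have hv : ∀ i, (m i : ℕ) < n := by
        intro i
        have h1 := (m 0).isLt
        have h2 : ¬ (m 0 : ℕ) = n := fun h => h0 (by rw [Fin.ext_iff]; simpa using h)
        rcases eq_or_ne i 0 with rfl | hi
        · omega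
        · have := hm0.1 0 i (Fin.pos_iff_ne_zero.mpr hi)
          omega
      rw [mem_msets]
      constructor
      · intro i j hij
        have := hm0.1 i j hij
        simp only [Fin.lt_def] at this ⊢
        simpa [Nat.mod_eq_of_lt (hv i), Nat.mod_eq_of_lt (hv j)] using this
      · intro i
        have := hm0.2 i
        simpa [Nat.mod_eq_of_lt (hv i)] using this
    · rw [mem_msets] at hm
      rw [Finset.mem_filter]
      refine ⟨mem_msets.mpr ⟨fun i j hij => by simpa using hm.1 i j hij,
        fun i => by simpa using hm.2 i⟩, ?_⟩
      intro h
      rw [Fin.ext_iff] at h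
      simp at h
      have := (m 0).isLt
      omega
    · rw [Finset.mem_filter] at hm
      obtain ⟨hm0, h0⟩ := hm
      rw [mem_msets] at hm0
      have hv : ∀ i, (m i : ℕ) < n := by
        intro i
        have h1 := (m 0).isLt
        have h2 : ¬ (m 0 : ℕ) = n := fun h => h0 (by rw [Fin.ext_iff]; simpa using h)
        rcases eq_or_ne i 0 with rfl | hi
        · omega
        · have := hm0.1 0 i (Fin.pos_iff_ne_zero.mpr hi)
          omega
      funext i
      rw [Fin.ext_iff]
      simp [Nat.mod_eq_of_lt (hv i)]
    · funext i
      rw [Fin.ext_iff]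
      simp [Nat.mod_eq_of_lt (m i).isLt]
    · rw [Finset.mem_filter] at hm
      obtain ⟨hm0, h0⟩ := hm
      rw [mem_msets] at hm0
      have hv : ∀ i, (m i : ℕ) < n := by
        intro i
        have h1 := (m 0).isLt
        have h2 : ¬ (m 0 : ℕ) = n := fun h => h0 (by rw [Fin.ext_iff]; simpa using h)
        rcases eq_or_ne i 0 with rfl | hi
        · omega
        · have := hm0.1 0 i (Fin.pos_iff_ne_zero.mpr hi)
          omega
      exact Finset.prod_congr rfl fun i _ => by simp [Nat.mod_eq_of_lt (hv i)]
  · -- part with m 0 = last n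
    rw [Finset.mul_sum]
    refine Finset.sum_nbij'
      (i := fun m => fun i : Fin r => (⟨(m i.succ : ℕ) % n, Nat.mod_lt _ hn0⟩ : Fin n))
      (j := fun m' => Fin.cons (Fin.last n) (fun i => (m' i).castSucc))
      ?_ ?_ ?_ ?_ ?_
    all_goals intro m hm
    · rw [Finset.mem_filter] at hm
      obtain ⟨hm0, h0⟩ := hm
      rw [not_not] at h0
      rw [mem_msets] at hm0
      have h0' : (m 0 : ℕ) = n := by rw [h0]; simp
      have hv : ∀ i : Fin r, (m i.succ : ℕ) < n := by
        intro i
        have := hm0.1 0 i.succ (Fin.succ_pos i)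
        omega
      rw [mem_msets]
      constructor
      · intro i j hij
        have := hm0.1 i.succ j.succ (by simpa using hij)
        simp only [Fin.lt_def] at this ⊢
        simpa [Nat.mod_eq_of_lt (hv i), Nat.mod_eq_of_lt (hv j)] using this
      · intro i
        have := hm0.2 i.succ
        simpa [Nat.mod_eq_of_lt (hv i)] using this
    · have hm' := mem_msets.mp hm
      rw [Finset.mem_filter]
      refine ⟨mem_msets.mpr ⟨?_, ?_⟩, by simp⟩
      · intro i j hij
        have hj : j ≠ 0 := by
          intro h; subst h; exact absurd hij (by simp)
        obtain ⟨j', rfl⟩ := Fin.eq_succ_of_ne_zero hj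
        rcases Fin.eq_zero_or_eq_succ i with rfl | ⟨i', rfl⟩
        · simp only [Fin.cons_zero, Fin.cons_succ]
          exact Fin.castSucc_lt_last _
        · simp only [Fin.cons_succ]
          have hij' : i' < j' := by rwa [Fin.succ_lt_succ_iff] at hij
          exact Fin.castSucc_lt_castSucc_iff.mpr (hm'.1 i' j' hij')
      · intro i
        rcases Fin.eq_zero_or_eq_succ i with rfl | ⟨i', rfl⟩
        · simpa using hn0
        · simpa using hm'.2 i'
    · rw [Finset.mem_filter] at hm
      obtain ⟨hm0, h0⟩ := hm
      rw [not_not] at h0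
      rw [mem_msets] at hm0
      have h0' : (m 0 : ℕ) = n := by rw [h0]; simp
      have hv : ∀ i : Fin r, (m i.succ : ℕ) < n := by
        intro i
        have := hm0.1 0 i.succ (Fin.succ_pos i)
        omega
      funext i
      rcases Fin.eq_zero_or_eq_succ i with rfl | ⟨i', rfl⟩
      · simp [h0]
      · show Fin.castSucc _ = m i'.succ
        rw [Fin.ext_iff]
        simp [Nat.mod_eq_of_lt (hv i')]
    · funext i
      rw [Fin.ext_iff]
      simp [Nat.mod_eq_of_lt (m i).isLt]
    · rw [Finset.mem_filter] at hm
      obtain ⟨hm0, h0⟩ := hm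
      rw [not_not] at h0
      rw [mem_msets] at hm0
      have h0' : (m 0 : ℕ) = n := by rw [h0]; simp
      have hv : ∀ i : Fin r, (m i.succ : ℕ) < n := by
        intro i
        have := hm0.1 0 i.succ (Fin.succ_pos i)
        omega
      rw [Fin.prod_univ_succ, h0']
      congr 1
      exact Finset.prod_congr rfl fun i _ => by
        simp [Fin.tail, Nat.mod_eq_of_lt (hv i)]

end Aux
lemma mem_indexSet3 {k r s : ℕ} {a : Fin r → ℕ} :
    a ∈ indexSet3 k r s ↔ (∑ i, a i = k) ∧ (∀ i, 1 ≤ a i) ∧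
      ((Finset.univ.filter fun i => 2 ≤ a i).card = s) := by
  simp [indexSet3, Finset.Nat.mem_antidiagonalTuple, and_assoc]

lemma indexSet3_empty_of_depth_lt {k r s : ℕ} (h : r < s) : indexSet3 k r s = ∅ := by
  rw [Finset.eq_empty_iff_forall_notMem]
  intro a ha
  rw [mem_indexSet3] at ha
  have h1 := Finset.card_filter_le (Finset.univ : Finset (Fin r)) (fun i => 2 ≤ a i)
  rw [ha.2.2] at h1
  simp at h1
  omega

lemma indexSet3_empty_of_wt {k r s : ℕ} (h : k < r + s) : indexSet3 k r s = ∅ := by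
  rw [Finset.eq_empty_iff_forall_notMem]
  intro a ha
  rw [mem_indexSet3] at ha
  obtain ⟨hsum, hpos, hh⟩ := ha
  have h1 : ∀ i ∈ (Finset.univ : Finset (Fin r)),
      (1 + if 2 ≤ a i then 1 else 0) ≤ a i := by
    intro i _
    have := hpos i
    split <;> omega
  have h2 := Finset.sum_le_sum h1
  rw [Finset.sum_add_distrib, hsum] at h2
  rw [← Finset.card_filter] at h2
  simp [hh] at h2
  omega

lemma height_succ {r : ℕ} (a : Fin (r + 1) → ℕ) :
    ((Finset.univ : Finset (Fin (r+1))).filter fun i => 2 ≤ a i).card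
      = (if 2 ≤ a 0 then 1 else 0)
        + ((Finset.univ : Finset (Fin r)).filter fun i => 2 ≤ a i.succ).card := by
  rw [Finset.card_filter, Finset.card_filter, Fin.sum_univ_succ]

lemma aux_fiber {r k s : ℕ} (c : ℕ) (hc : 1 ≤ c) (hck : c ≤ k)
    (hs : (if 2 ≤ c then 1 else 0) ≤ s) (F : (Fin r → ℕ) → ℂ) :
    ∑ a ∈ (indexSet3 k (r + 1) s).filter (fun a => a 0 = c), F (Fin.tail a)
      = ∑ b ∈ indexSet3 (k - c) r (s - if 2 ≤ c then 1 else 0), F b := by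
  refine Finset.sum_nbij' (i := fun a => Fin.tail a) (j := fun b => Fin.cons c b)
    ?_ ?_ ?_ ?_ ?_
  all_goals intro a ha
  · rw [Finset.mem_filter] at ha
    obtain ⟨ha, h0⟩ := ha
    rw [mem_indexSet3] at ha ⊢
    obtain ⟨hsum, hpos, hh⟩ := ha
    rw [Fin.sum_univ_succ] at hsum
    rw [height_succ, h0] at hh
    refine ⟨?_, fun i => hpos i.succ, ?_⟩
    · show ∑ i : Fin r, a i.succ = k - c
      omega
    · show ((Finset.univ : Finset (Fin r)).filter fun i => 2 ≤ a i.succ).card = _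
      omega
  · rw [mem_indexSet3] at ha
    obtain ⟨hsum, hpos, hh⟩ := ha
    rw [Finset.mem_filter, mem_indexSet3]
    refine ⟨⟨?_, ?_, ?_⟩, by simp⟩
    · rw [Fin.sum_univ_succ]
      simp only [Fin.cons_zero, Fin.cons_succ]
      omega
    · intro i
      rcases Fin.eq_zero_or_eq_succ i with rfl | ⟨i', rfl⟩
      · simpa using hc
      · simpa using hpos i'
    · rw [height_succ]
      simp only [Fin.cons_zero, Fin.cons_succ]
      rw [hh]
      omega
  · rw [Finset.mem_filter] at ha
    rw [← ha.2]
    exact Fin.cons_self_tail a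
  · exact Fin.tail_cons _ _
  · rfl

lemma sum_indexSet3_succ {r : ℕ} (k s : ℕ) (hk : 1 ≤ k) (F : ℕ → (Fin r → ℕ) → ℂ) :
    ∑ a ∈ indexSet3 k (r + 1) s, F (a 0) (Fin.tail a)
      = ∑ b ∈ indexSet3 (k - 1) r s, F 1 b
        + (if 1 ≤ s then
            ∑ c ∈ Finset.Icc 2 k, ∑ b ∈ indexSet3 (k - c) r (s - 1), F c b
          else 0) := by
  rw [← Finset.sum_filter_add_sum_filter_not (indexSet3 k (r + 1) s) (fun a => a 0 = 1)]
  congr 1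
  · have hcongr :
        ∑ a ∈ (indexSet3 k (r+1) s).filter (fun a => a 0 = 1), F (a 0) (Fin.tail a)
          = ∑ a ∈ (indexSet3 k (r+1) s).filter (fun a => a 0 = 1), F 1 (Fin.tail a) :=
      Finset.sum_congr rfl fun a ha => by rw [(Finset.mem_filter.mp ha).2]
    rw [hcongr]
    have := aux_fiber (r := r) (k := k) (s := s) 1 le_rfl hk (by simp) (F 1)
    simpa using this
  · by_cases hs : 1 ≤ s
    · rw [if_pos hs]
      have hmaps : ∀ a ∈ (indexSet3 k (r+1) s).filter (fun a => ¬ a 0 = 1),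
          a 0 ∈ Finset.Icc 2 k := by
        intro a ha
        rw [Finset.mem_filter, mem_indexSet3] at ha
        obtain ⟨⟨hsum, hpos, _⟩, h0⟩ := ha
        have h1 := hpos 0
        have h2 : a 0 ≤ k := by
          rw [← hsum]
          exact Finset.single_le_sum (fun i _ => Nat.zero_le _) (Finset.mem_univ 0)
        rw [Finset.mem_Icc]
        omega
      rw [← Finset.sum_fiberwise_of_maps_to hmaps (fun a => F (a 0) (Fin.tail a))]
      refine Finset.sum_congr rfl fun c hc => ?_
      rw [Finset.mem_Icc] at hc
      have hfil : ((indexSet3 k (r+1) s).filter (fun a => ¬ a 0 = 1)).filter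
            (fun a => a 0 = c)
          = (indexSet3 k (r+1) s).filter (fun a => a 0 = c) := by
        ext a
        simp only [Finset.mem_filter]
        constructor
        · rintro ⟨⟨h1, _⟩, h2⟩; exact ⟨h1, h2⟩
        · rintro ⟨h1, h2⟩; exact ⟨⟨h1, by omega⟩, h2⟩
      rw [hfil]
      have hcongr :
          ∑ a ∈ (indexSet3 k (r+1) s).filter (fun a => a 0 = c), F (a 0) (Fin.tail a)
            = ∑ a ∈ (indexSet3 k (r+1) s).filter (fun a => a 0 = c), F c (Fin.tail a) :=
        Finset.sum_congr rfl fun a ha => by rw [(Finset.mem_filter.mp ha).2]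
      rw [hcongr]
      have := aux_fiber (r := r) (k := k) (s := s) c (by omega) (by omega)
        (by rw [if_pos hc.1]; exact hs) (F c)
      rw [if_pos hc.1] at this
      exact this
    · rw [if_neg hs]
      rw [show ((indexSet3 k (r+1) s).filter (fun a => ¬ a 0 = 1)) = ∅ from ?_]
      · exact Finset.sum_empty
      · rw [Finset.eq_empty_iff_forall_notMem]
        intro a ha
        rw [Finset.mem_filter, mem_indexSet3] at ha
        obtain ⟨⟨hsum, hpos, hh⟩, h0⟩ := ha
        have h2 : 2 ≤ a 0 := by have := hpos 0; omega
        have hmem : (0 : Fin (r+1)) ∈ Finset.univ.filter (fun i => 2 ≤ a i) := by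
          simp [h2]
        have hcard := Finset.card_pos.mpr ⟨0, hmem⟩
        omega

noncomputable def Ssum (n : ℕ) (q : ℂ) (k r s : ℕ) : ℂ :=
  ∑ b ∈ indexSet3 k r s, Lpoly n b q 1

lemma Ssum_eq_zero_of_depth_lt {n : ℕ} {q : ℂ} {k r s : ℕ} (h : r < s) :
    Ssum n q k r s = 0 := by
  unfold Ssum
  rw [indexSet3_empty_of_depth_lt h, Finset.sum_empty]

lemma Ssum_eq_zero_of_wt {n : ℕ} {q : ℂ} {k r s : ℕ} (h : k < r + s) :
    Ssum n q k r s = 0 := by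
  unfold Ssum
  rw [indexSet3_empty_of_wt h, Finset.sum_empty]

lemma Ssum_depth_zero (n n' : ℕ) (q : ℂ) (k s : ℕ) :
    Ssum n q k 0 s = Ssum n' q k 0 s := by
  unfold Ssum
  exact Finset.sum_congr rfl fun b _ => by rw [Lpoly_nil, Lpoly_nil]

lemma Ssum_succ (n : ℕ) (hn : 1 ≤ n) (q : ℂ) {r : ℕ} (k s : ℕ) (hk : 1 ≤ k) :
    Ssum (n + 1) q k (r + 1) s
      = Ssum n q k (r + 1) s + ((1 - q ^ n)⁻¹ * Ssum n q (k - 1) r s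
        + (if 1 ≤ s then
            ∑ c ∈ Finset.Icc 2 k, (1 - q ^ n)⁻¹ ^ c * Ssum n q (k - c) r (s - 1)
          else 0)) := by
  unfold Ssum
  rw [Finset.sum_congr rfl (fun a _ => Lpoly_succ n hn a q), Finset.sum_add_distrib]
  congr 1
  rw [sum_indexSet3_succ k s hk (fun c b => (1 - q ^ n)⁻¹ ^ c * Lpoly n b q 1)]
  congr 1
  · rw [Finset.mul_sum]
    exact Finset.sum_congr rfl fun b _ => by rw [pow_one]
  · split
    · exact Finset.sum_congr rfl fun c _ => by rw [Finset.mul_sum]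
    · rfl
lemma tele (a : ℂ) (ha : a ≠ 0) (k : ℕ) (hk : 2 ≤ k) (T : ℕ → ℂ) :
    (a * a) * ∑ c ∈ Finset.Icc 2 k, a⁻¹ ^ c * T (k - c)
      - a * ∑ c ∈ Finset.Icc 2 (k - 1), a⁻¹ ^ c * T (k - 1 - c)
      = T (k - 2) := by
  have hshift : ∑ c ∈ Finset.Icc 2 (k - 1), a⁻¹ ^ c * T (k - 1 - c)
      = ∑ c ∈ Finset.Icc 3 k, a⁻¹ ^ (c - 1) * T (k - c) := by
    refine Finset.sum_nbij' (i := fun c => c + 1) (j := fun c => c - 1) ?_ ?_ ?_ ?_ ?_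
    · intro c hc; rw [Finset.mem_Icc] at hc; simp only [Finset.mem_Icc]; omega
    · intro c hc; rw [Finset.mem_Icc] at hc; simp only [Finset.mem_Icc]; omega
    · intro c hc; show c + 1 - 1 = c; omega
    · intro c hc; rw [Finset.mem_Icc] at hc; show c - 1 + 1 = c; omega
    · intro c hc
      rw [Finset.mem_Icc] at hc
      show _ = a⁻¹ ^ (c + 1 - 1) * T (k - (c + 1))
      rw [show c + 1 - 1 = c from rfl, show k - (c + 1) = k - 1 - c from by omega]
  rw [hshift]
  rw [show Finset.Icc 2 k = insert 2 (Finset.Icc 3 k) from by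
    ext c; simp [Finset.mem_Icc]; omega]
  rw [Finset.sum_insert (by simp)]
  have hS : ∑ c ∈ Finset.Icc 3 k, a⁻¹ ^ c * T (k - c)
      = a⁻¹ * ∑ c ∈ Finset.Icc 3 k, a⁻¹ ^ (c - 1) * T (k - c) := by
    rw [Finset.mul_sum]
    refine Finset.sum_congr rfl fun c hc => ?_
    rw [Finset.mem_Icc] at hc
    rw [show a⁻¹ ^ c = a⁻¹ * a⁻¹ ^ (c - 1) from by
      rw [← pow_succ']; congr 1; omega]
    ring
  rw [hS]
  have h3 : a * a⁻¹ = 1 := mul_inv_cancel₀ ha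
  have h2 : a * a * a⁻¹ ^ 2 = 1 := by
    rw [pow_two]
    calc a * a * (a⁻¹ * a⁻¹) = (a * a⁻¹) * (a * a⁻¹) := by ring
    _ = 1 := by rw [h3, mul_one]
  linear_combination (T (k - 2)) * h2
    + (∑ c ∈ Finset.Icc 3 k, a⁻¹ ^ (c - 1) * T (k - c)) * a * h3

lemma tele0 (a : ℂ) (ha : a ≠ 0) (k : ℕ) (hk : 2 ≤ k) (T : ℕ → ℂ)
    (h3 : ∀ c, 3 ≤ c → c ≤ k → T (k - c) = 0) :
    (a * a) * ∑ c ∈ Finset.Icc 2 k, a⁻¹ ^ c * T (k - c) = T (k - 2) := by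
  rw [show Finset.Icc 2 k = insert 2 (Finset.Icc 3 k) from by
    ext c; simp [Finset.mem_Icc]; omega]
  rw [Finset.sum_insert (by simp)]
  rw [Finset.sum_eq_zero (fun c hc => by
    rw [Finset.mem_Icc] at hc
    rw [h3 c hc.1 hc.2, mul_zero])]
  have h2 : a * a * a⁻¹ ^ 2 = 1 := by
    have h3' : a * a⁻¹ = 1 := mul_inv_cancel₀ ha
    rw [pow_two]
    calc a * a * (a⁻¹ * a⁻¹) = (a * a⁻¹) * (a * a⁻¹) := by ring
    _ = 1 := by rw [h3', mul_one]
  linear_combination (T (k - 2)) * h2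

lemma key_scalar (n : ℕ) (hn : 1 ≤ n) (q : ℂ) (ha : 1 - q ^ n ≠ 0) (x y z : ℕ) :
    (Ssum (n + 1) q (x + y + 2 * z) (y + z) z * ((1 - q ^ n) * (1 - q ^ n)) -
        if 1 ≤ x then Ssum (n + 1) q (x - 1 + y + 2 * z) (y + z) z * (1 - q ^ n) else 0) =
      (((Ssum n q (x + y + 2 * z) (y + z) z * ((1 - q ^ n) * (1 - q ^ n)) -
              if 1 ≤ x then Ssum n q (x - 1 + y + 2 * z) (y + z) z * (1 - q ^ n) else 0) +
            if 1 ≤ y then Ssum n q (x + (y - 1) + 2 * z) (y - 1 + z) z * (1 - q ^ n) else 0) -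
          if 1 ≤ x then if 1 ≤ y then
            Ssum n q (x - 1 + (y - 1) + 2 * z) (y - 1 + z) z else 0 else 0) +
        if 1 ≤ z then Ssum n q (x + y + 2 * (z - 1)) (y + (z - 1)) (z - 1) else 0 := by
  have h3m : (1 - q ^ n) * (1 - q ^ n)⁻¹ = 1 := mul_inv_cancel₀ ha
  by_cases hr : y + z = 0
  · have hy : y = 0 := by omega
    have hz : z = 0 := by omega
    subst hy; subst hz
    norm_num
    rw [Ssum_depth_zero (n + 1) n q, Ssum_depth_zero (n + 1) n q]
  · obtain ⟨r', hr'⟩ : ∃ r', y + z = r' + 1 := ⟨y + z - 1, by omega⟩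
    have hk1 : 1 ≤ x + y + 2 * z := by omega
    rw [hr', Ssum_succ n hn q _ z hk1]
    by_cases hx : 1 ≤ x
    · have hk2 : 1 ≤ x - 1 + y + 2 * z := by omega
      rw [Ssum_succ n hn q _ z hk2]
      simp only [if_pos hx]
      rw [show x - 1 + y + 2 * z = x + y + 2 * z - 1 from by omega]
      rw [show x + y + 2 * z - 1 - 1 = x + y + 2 * z - 2 from by omega]
      by_cases hy : 1 ≤ y
      · simp only [if_pos hy]
        rw [show x + (y - 1) + 2 * z = x + y + 2 * z - 1 from by omega,
            show y - 1 + z = r' from by omega,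
            show x - 1 + (y - 1) + 2 * z = x + y + 2 * z - 2 from by omega]
        by_cases hz : 1 ≤ z
        · simp only [if_pos hz]
          rw [show x + y + 2 * (z - 1) = x + y + 2 * z - 2 from by omega,
              show y + (z - 1) = r' from by omega]
          have hT := tele (1 - q ^ n) ha (x + y + 2 * z) (by omega)
            (fun m => Ssum n q m r' (z - 1))
          linear_combination hT + (Ssum n q (x + y + 2 * z - 1) r' z * (1 - q ^ n)
            - Ssum n q (x + y + 2 * z - 2) r' z) * h3m
        · simp only [if_neg hz]
          linear_combination (Ssum n q (x + y + 2 * z - 1) r' z * (1 - q ^ n)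
            - Ssum n q (x + y + 2 * z - 2) r' z) * h3m
      · simp only [if_neg hy]
        have hz : 1 ≤ z := by omega
        simp only [if_pos hz]
        rw [show x + y + 2 * (z - 1) = x + y + 2 * z - 2 from by omega,
            show y + (z - 1) = r' from by omega]
        have hv1 : Ssum n q (x + y + 2 * z - 1) r' z = 0 :=
          Ssum_eq_zero_of_depth_lt (by omega)
        have hv2 : Ssum n q (x + y + 2 * z - 2) r' z = 0 :=
          Ssum_eq_zero_of_depth_lt (by omega)
        rw [hv1, hv2]
        have hT := tele (1 - q ^ n) ha (x + y + 2 * z) (by omega)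
          (fun m => Ssum n q m r' (z - 1))
        linear_combination hT
    · simp only [if_neg hx]
      by_cases hy : 1 ≤ y
      · simp only [if_pos hy]
        rw [show x + (y - 1) + 2 * z = x + y + 2 * z - 1 from by omega,
            show y - 1 + z = r' from by omega]
        by_cases hz : 1 ≤ z
        · simp only [if_pos hz]
          rw [show x + y + 2 * (z - 1) = x + y + 2 * z - 2 from by omega,
              show y + (z - 1) = r' from by omega]
          have hT := tele0 (1 - q ^ n) ha (x + y + 2 * z) (by omega)
            (fun m => Ssum n q m r' (z - 1))
            (fun c hc1 hc2 => Ssum_eq_zero_of_wt (by omega))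
          linear_combination hT + (Ssum n q (x + y + 2 * z - 1) r' z * (1 - q ^ n)) * h3m
        · simp only [if_neg hz]
          linear_combination (Ssum n q (x + y + 2 * z - 1) r' z * (1 - q ^ n)) * h3m
      · simp only [if_neg hy]
        have hz : 1 ≤ z := by omega
        simp only [if_pos hz]
        rw [show x + y + 2 * (z - 1) = x + y + 2 * z - 2 from by omega,
            show y + (z - 1) = r' from by omega]
        have hv1 : Ssum n q (x + y + 2 * z - 1) r' z = 0 :=
          Ssum_eq_zero_of_depth_lt (by omega)
        rw [hv1]
        have hT := tele0 (1 - q ^ n) ha (x + y + 2 * z) (by omega)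
          (fun m => Ssum n q m r' (z - 1))
          (fun c hc1 hc2 => Ssum_eq_zero_of_wt (by omega))
        linear_combination hT
lemma coeff_PhiOne (n : ℕ) (q : ℂ) (e : Fin 3 →₀ ℕ) :
    MvPowerSeries.coeff e (PhiOne n q)
      = Ssum n q (e 0 + e 1 + 2 * e 2) (e 1 + e 2) (e 2) := rfl

lemma coeff_mul_Xv (φ : MvPowerSeries (Fin 3) ℂ) (i : Fin 3) (e : Fin 3 →₀ ℕ) :
    MvPowerSeries.coeff e (φ * Xv i)
      = if 1 ≤ e i then MvPowerSeries.coeff (e - Finsupp.single i 1) φ else 0 := by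
  rw [Xv, MvPowerSeries.X_def, MvPowerSeries.coeff_mul_monomial]
  simp [Finsupp.single_le_iff]

lemma coeff_mul_Cc (φ : MvPowerSeries (Fin 3) ℂ) (x : ℂ) (e : Fin 3 →₀ ℕ) :
    MvPowerSeries.coeff e (φ * Cc x) = MvPowerSeries.coeff e φ * x :=
  MvPowerSeries.coeff_mul_C e φ x

lemma Cc_mul (x y : ℂ) : Cc (x * y) = Cc x * Cc y := by unfold Cc; exact map_mul _ _ _

lemma KL (n : ℕ) (hn : 1 ≤ n) (q : ℂ) (ha : 1 - q ^ n ≠ 0) :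
    PhiOne (n + 1) q * (Cc (1 - q ^ n) * (Cc (1 - q ^ n) - Xv 0)) =
      PhiOne n q * ((Cc (1 - q ^ n) - Xv 0) * (Cc (1 - q ^ n) + Xv 1) + Xv 2) := by
  have expand1 : PhiOne (n+1) q * (Cc (1 - q ^ n) * (Cc (1 - q ^ n) - Xv 0))
      = PhiOne (n+1) q * Cc ((1 - q ^ n) * (1 - q ^ n))
        - PhiOne (n+1) q * Xv 0 * Cc (1 - q ^ n) := by
    rw [Cc_mul]; ring
  have expand2 : PhiOne n q * ((Cc (1 - q ^ n) - Xv 0) * (Cc (1 - q ^ n) + Xv 1) + Xv 2)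
      = PhiOne n q * Cc ((1 - q ^ n) * (1 - q ^ n)) - PhiOne n q * Xv 0 * Cc (1 - q ^ n)
        + PhiOne n q * Xv 1 * Cc (1 - q ^ n) - PhiOne n q * Xv 1 * Xv 0
        + PhiOne n q * Xv 2 := by
    rw [Cc_mul]; ring
  rw [expand1, expand2]
  ext e
  simp only [map_sub, map_add]
  simp only [coeff_mul_Cc, coeff_mul_Xv, coeff_PhiOne]
  simp only [Finsupp.tsub_apply, Finsupp.single_apply]
  norm_num [Fin.ext_iff]
  exact key_scalar n hn q ha (e 0) (e 1) (e 2)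
lemma Cc_one_sub (x : ℂ) : Cc (1 - x) = 1 - Cc x := by
  unfold Cc; rw [map_sub, map_one]

lemma indexSet3_zero_depth_empty {k s : ℕ} (hk : 1 ≤ k) : indexSet3 k 0 s = ∅ := by
  rw [Finset.eq_empty_iff_forall_notMem]
  intro a ha
  rw [mem_indexSet3] at ha
  have h1 := ha.1
  simp at h1
  omega

lemma msets_one_empty {r : ℕ} : msets 1 (r + 1) = ∅ := by
  rw [Finset.eq_empty_iff_forall_notMem]
  intro m hm
  rw [mem_msets] at hm
  have := hm.2 0
  have := (m 0).isLt
  omega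

lemma Lpoly_one_depth_pos {r : ℕ} (a : Fin (r + 1) → ℕ) (q t : ℂ) :
    Lpoly 1 a q t = 0 := by
  unfold Lpoly
  rw [msets_one_empty, Finset.sum_empty]

lemma PhiOne_one (q : ℂ) : PhiOne 1 q = 1 := by
  apply MvPowerSeries.ext
  intro e
  rw [coeff_PhiOne, MvPowerSeries.coeff_one]
  by_cases he : e = 0
  · subst he
    rw [if_pos rfl]
    norm_num
    unfold Ssum
    rw [show indexSet3 0 0 0 = Finset.Nat.antidiagonalTuple 0 0 from by
      unfold indexSet3
      refine Finset.filter_true_of_mem fun a _ => ⟨fun i => i.elim0, by simp⟩]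
    rw [Finset.Nat.antidiagonalTuple_zero_zero, Finset.sum_singleton, Lpoly_nil]
  · rw [if_neg he]
    rcases Nat.eq_zero_or_pos (e 1 + e 2) with h0 | hpos
    · have hx : 1 ≤ e 0 := by
        rcases Nat.eq_zero_or_pos (e 0) with h1 | h1
        · exfalso
          apply he
          ext i
          fin_cases i <;> simp <;> omega
        · exact h1
      unfold Ssum
      rw [show e 1 + e 2 = 0 from h0]
      rw [indexSet3_zero_depth_empty (by omega), Finset.sum_empty]
    · obtain ⟨r', hr'⟩ : ∃ r', e 1 + e 2 = r' + 1 := ⟨e 1 + e 2 - 1, by omega⟩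
      unfold Ssum
      rw [hr']
      exact Finset.sum_eq_zero fun b _ => Lpoly_one_depth_pos b q 1
/-- `Φ(1;q)·Π_{j=1}^{n-1}(1-q^j)(1-u-q^j) = Π_{j=1}^{n-1} P(q^j)`
in `ℂ[[u,v,w]]`, where `P(X) = (1-u-X)(1+v-X)+w`. -/
theorem PhiOne_eval (n : ℕ) (hn : 0 < n) (q : ℂ)
    (hq : ∀ j : ℕ, 1 ≤ j → j ≤ n - 1 → q ^ j ≠ 1) :
    PhiOne n q * ∏ j ∈ Finset.Ico 1 n, (Cc (1 - q ^ j) * (1 - Xv 0 - Cc (q ^ j))) =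
      ∏ j ∈ Finset.Ico 1 n,
        ((1 - Xv 0 - Cc (q ^ j)) * (1 + Xv 1 - Cc (q ^ j)) + Xv 2) := by
  revert hn hq
  induction n with
  | zero => intro hn _; exact absurd hn (by norm_num)
  | succ m ih =>
    intro hn hq
    rcases Nat.eq_zero_or_pos m with rfl | hm
    · rw [Finset.Ico_self, Finset.prod_empty, Finset.prod_empty, mul_one, PhiOne_one]
    · have hq' : ∀ j : ℕ, 1 ≤ j → j ≤ m - 1 → q ^ j ≠ 1 := fun j h1 h2 => hq j h1 (by omega)
      have IH := ih hm hq'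
      have hqm : q ^ m ≠ 1 := hq m hm (by omega)
      have ham : 1 - q ^ m ≠ 0 := by
        intro h
        rw [sub_eq_zero] at h
        exact hqm h.symm
      have hg : (1 : MvPowerSeries (Fin 3) ℂ) - Xv 0 - Cc (q ^ m)
          = Cc (1 - q ^ m) - Xv 0 := by
        rw [Cc_one_sub]; ring
      have hh : (1 : MvPowerSeries (Fin 3) ℂ) + Xv 1 - Cc (q ^ m)
          = Cc (1 - q ^ m) + Xv 1 := by
        rw [Cc_one_sub]; ring
      have hKL := KL m hm q ham
      rw [Finset.prod_Ico_succ_top (by omega), Finset.prod_Ico_succ_top (by omega)]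
      rw [hg, hh]
      calc PhiOne (m + 1) q *
            ((∏ j ∈ Finset.Ico 1 m, (Cc (1 - q ^ j) * (1 - Xv 0 - Cc (q ^ j)))) *
              (Cc (1 - q ^ m) * (Cc (1 - q ^ m) - Xv 0)))
          = (PhiOne (m + 1) q * (Cc (1 - q ^ m) * (Cc (1 - q ^ m) - Xv 0))) *
            (∏ j ∈ Finset.Ico 1 m, (Cc (1 - q ^ j) * (1 - Xv 0 - Cc (q ^ j)))) := by
            ring
        _ = (PhiOne m q * ((Cc (1 - q ^ m) - Xv 0) * (Cc (1 - q ^ m) + Xv 1) + Xv 2)) *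
            (∏ j ∈ Finset.Ico 1 m, (Cc (1 - q ^ j) * (1 - Xv 0 - Cc (q ^ j)))) := by
            rw [hKL]
        _ = (PhiOne m q *
              ∏ j ∈ Finset.Ico 1 m, (Cc (1 - q ^ j) * (1 - Xv 0 - Cc (q ^ j)))) *
            ((Cc (1 - q ^ m) - Xv 0) * (Cc (1 - q ^ m) + Xv 1) + Xv 2) := by
            ring
        _ = (∏ j ∈ Finset.Ico 1 m,
              ((1 - Xv 0 - Cc (q ^ j)) * (1 + Xv 1 - Cc (q ^ j)) + Xv 2)) *
            ((Cc (1 - q ^ m) - Xv 0) * (Cc (1 - q ^ m) + Xv 1) + Xv 2) := by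
            rw [IH]
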